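/- In a Simple Clock Auction against a straightforward bidder, for every demand sequence (k^n) of the player there exists a round N at which the auction terminates, i.e. k^N_j + D_j(p^N) ≤ m_j for all j ∈ [M], where (p^n) is the induced price sequence. -/

import Mathlib

open Finset Set

/-- Bundles of items: component `j` ranges over `{0, …, m j}`. -/
abbrev Bundle {M : ℕ} (m : Fin M → ℕ) := ∀ j, Fin (m j + 1)

/-- Quasi-linear payoff `v(δ) − ⟨δ, p⟩`. -/
def payoff {M : ℕ} {m : Fin M → ℕ} (v : Bundle m → ℝ) (δ : Bundle m) (p : Fin M → ℝ) : ℝ :=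
  v δ - ∑ j, (δ j : ℝ) * p j

/-- auction termination: for every demand sequence `k` of the player,
with prices following the SCA update against a straightforward bidder with demand `D`,
there is a round `N` with `k^N_j + D_j(p^N) ≤ m_j` for all `j`. -/
theorem stmt2 {M : ℕ} (m : Fin M → ℕ) (hm : ∀ j, 0 < m j)
    (v : Bundle m → ℝ)
    (hv0 : v (fun _ => 0) = 0) (hvnn : ∀ δ, 0 ≤ v δ)
    (hvmono : ∀ δ δ' : Bundle m, (∀ j, (δ j : ℕ) ≤ (δ' j : ℕ)) → v δ ≤ v δ')
    (pmin : Fin M → ℝ) (hpmin : ∀ j, 0 ≤ pmin j)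
    (ε : Fin M → ℝ) (hε : ∀ j, 0 < ε j)
    (D : (Fin M → ℝ) → Bundle m)
    (k : ℕ → Bundle m)
    (p : ℕ → Fin M → ℝ)
    (hp0 : p 0 = pmin)
    (hstep : ∀ n j, p (n + 1) j =
      p n j + (if m j < (k n j : ℕ) + (D (p n) j : ℕ) then ε j else 0))
    (hD : ∀ n d, d ≠ D (p n) → payoff v d (p n) < payoff v (D (p n)) (p n)) :
    ∃ N, ∀ j, (k N j : ℕ) + (D (p N) j : ℕ) ≤ m j := by
  rcases isEmpty_or_nonempty (Fin M) with h | hne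
  · exact ⟨0, fun j => (h.false j).elim⟩
  by_contra hcon
  push_neg at hcon
  -- hcon : ∀ N, ∃ j, m j < k N j + D (p N) j
  obtain ⟨V, hV⟩ : ∃ V, ∀ δ : Bundle m, v δ ≤ V := by
    have hbn : Nonempty (Bundle m) := ⟨fun _ => 0⟩
    exact ⟨Finset.univ.sup' Finset.univ_nonempty v,
      fun δ => Finset.le_sup' v (Finset.mem_univ δ)⟩
  have hnn : ∀ n j, 0 ≤ p n j := by
    intro n
    induction n with
    | zero => intro j; rw [hp0]; exact hpmin j
    | succ n ih =>
      intro j; rw [hstep]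
      split
      · linarith [ih j, (hε j).le]
      · simpa using ih j
  have hkey : ∀ n j, V < p n j → (D (p n) j : ℕ) = 0 := by
    intro n j hpj
    by_contra hd
    have hd1 : 1 ≤ (D (p n) j : ℕ) := Nat.one_le_iff_ne_zero.mpr hd
    have hne0 : (fun _ => 0 : Bundle m) ≠ D (p n) := by
      intro he
      have := congrFun he j
      apply hd
      rw [← this]
      simp
    have h0 : payoff v (fun _ => 0) (p n) < payoff v (D (p n)) (p n) := hD n _ hne0
    have hpay0 : payoff v (fun _ => 0 : Bundle m) (p n) = 0 := by
      simp [payoff, hv0]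
    have hub : payoff v (D (p n)) (p n) ≤ V - p n j := by
      unfold payoff
      have h1 : ((D (p n) j : ℕ) : ℝ) * p n j ≤ ∑ i, ((D (p n) i : ℕ) : ℝ) * p n i := by
        apply Finset.single_le_sum (f := fun i => ((D (p n) i : ℕ) : ℝ) * p n i)
        · intro i _
          exact mul_nonneg (by positivity) (hnn n i)
        · exact Finset.mem_univ j
      have h2 : p n j ≤ ((D (p n) j : ℕ) : ℝ) * p n j :=
        le_mul_of_one_le_left (hnn n j) (by exact_mod_cast hd1)
      have h3 := hV (D (p n))
      have : ∑ i, ((D (p n) i : ℝ)) * p n i = ∑ i, ((D (p n) i : ℕ) : ℝ) * p n i := by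
        apply Finset.sum_congr rfl
        intro i _
        norm_cast
      rw [this]
      linarith
    linarith
  have hk : ∀ n j, (k n j : ℕ) ≤ m j := fun n j => Nat.lt_succ_iff.mp (k n j).isLt
  have hub : ∀ n j, p n j ≤ max (pmin j) (V + ε j) := by
    intro n
    induction n with
    | zero => intro j; rw [hp0]; exact le_max_left _ _
    | succ n ih =>
      intro j
      rw [hstep]
      split
      · rename_i hlt
        have hD1 : 1 ≤ (D (p n) j : ℕ) := by
          have := hk n j; omega
        have hple : p n j ≤ V := by
          by_contra h
          have := hkey n j (not_le.mp h)
          omega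
        calc p n j + ε j ≤ V + ε j := by linarith
          _ ≤ _ := le_max_right _ _
      · simpa using ih j
  obtain ⟨εm, hεm_pos, hεm_le⟩ : ∃ e, 0 < e ∧ ∀ j, e ≤ ε j := by
    refine ⟨Finset.univ.inf' Finset.univ_nonempty ε, ?_, fun j => Finset.inf'_le ε (Finset.mem_univ j)⟩
    obtain ⟨j0, _, hj0⟩ := Finset.exists_mem_eq_inf' (Finset.univ_nonempty (α := Fin M)) ε
    rw [hj0]; exact hε j0
  have hsum : ∀ n : ℕ, ∑ j, pmin j + (n : ℝ) * εm ≤ ∑ j, p n j := by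
    intro n
    induction n with
    | zero => simp [hp0]
    | succ n ih =>
      obtain ⟨j0, hj0⟩ := hcon n
      have hstep_sum : ∑ j, p (n + 1) j =
          ∑ j, p n j + ∑ j, (if m j < (k n j : ℕ) + (D (p n) j : ℕ) then ε j else 0) := by
        rw [← Finset.sum_add_distrib]
        exact Finset.sum_congr rfl fun j _ => hstep n j
      have h1 : ε j0 ≤ ∑ j, (if m j < (k n j : ℕ) + (D (p n) j : ℕ) then ε j else 0) := by
        have := Finset.single_le_sum
          (f := fun j => (if m j < (k n j : ℕ) + (D (p n) j : ℕ) then ε j else 0))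
          (fun j _ => by split <;> [exact (hε j).le; exact le_refl 0]) (Finset.mem_univ j0)
        simpa [hj0] using this
      have h2 := hεm_le j0
      push_cast
      linarith
  obtain ⟨n, hn⟩ := exists_nat_gt ((∑ j, max (pmin j) (V + ε j) - ∑ j, pmin j) / εm)
  rw [div_lt_iff₀ hεm_pos] at hn
  have h1 := hsum n
  have h2 : ∑ j, p n j ≤ ∑ j, max (pmin j) (V + ε j) :=
    Finset.sum_le_sum fun j _ => hub n j
  linarith
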